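/- For every t ≥ 0 and every j = 1, …, N, the distribution at time t of the trap-model chain started uniformly satisfies (1/N)·Σ_{i=1}^N (exp(−t·L_N))_{i,j} = Σ_{k=1}^N γ_k · e^{−t·λ_k}/(x_j − λ_k), where exp(−t·L_N) is the matrix exponential. -/

import Mathlib

/-- For every `t ≥ 0` and every `j`, the distribution at time `t` of the
trap-model chain started from the uniform distribution satisfies
`(1/N) ∑ i, (exp (-t • L)) i j = ∑ k, γ k * exp (-t * lam k) / (x j - lam k)`,
where `exp` on the left is the matrix exponential, `0 = lam 0 < … < lam (N-1)` are the zeros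
of `φ` (the eigenvalues of `L`) and `γ k = (∑ j, x j / (x j - lam k)²)⁻¹`. -/
theorem rem_trap_uniform_distribution_spectral_formula
    (N : ℕ) (hN : 2 ≤ N) (x : Fin N → ℝ)
    (hx_pos : ∀ i, 0 < x i) (hx_mono : StrictMono x)
    (L : Matrix (Fin N) (Fin N) ℝ)
    (hL : ∀ i j, L i j = if i = j then ((N - 1 : ℝ) / N) * x i else -(x i) / N)
    (lam : Fin N → ℝ) (hlam_mono : StrictMono lam)
    (hlam_zero : lam ⟨0, by omega⟩ = 0)
    (hlam_ne : ∀ k j, x j ≠ lam k)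
    (hlam_root : ∀ k, ∑ j : Fin N, lam k / (x j - lam k) = 0)
    (γ : Fin N → ℝ) (hγ : ∀ k, γ k = (∑ j : Fin N, x j / (x j - lam k) ^ 2)⁻¹) :
    ∀ t : ℝ, 0 ≤ t → ∀ j : Fin N,
      (1 / (N : ℝ)) * ∑ i : Fin N, (NormedSpace.exp (-(t • L))) i j =
        ∑ k : Fin N, γ k * Real.exp (-(t * lam k)) / (x j - lam k) := by
  have hNne : (N : ℝ) ≠ 0 := by positivity
  have hd : ∀ k j, x j - lam k ≠ 0 := fun k j => sub_ne_zero.mpr (hlam_ne k j)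
  set V : Matrix (Fin N) (Fin N) ℝ := fun i k => x i / (x i - lam k) with hV
  set W : Matrix (Fin N) (Fin N) ℝ := fun k j => γ k / (x j - lam k) with hW
  -- column sums of V
  have hcol : ∀ k, ∑ j : Fin N, V j k = N := by
    intro k
    have : ∀ j : Fin N, V j k = 1 + lam k / (x j - lam k) := by
      intro j
      rw [hV]
      have := hd k j
      field_simp
      ring
    simp_rw [this]
    rw [Finset.sum_add_distrib, hlam_root k]
    simp
  -- positivity of the normalization sum
  have hsum_pos : ∀ k, 0 < ∑ j : Fin N, x j / (x j - lam k) ^ 2 := by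
    intro k
    apply Finset.sum_pos
    · intro j _
      exact div_pos (hx_pos j) (pow_two_pos_of_ne_zero (hd k j))
    · have : Nonempty (Fin N) := ⟨⟨0, by omega⟩⟩
      exact Finset.univ_nonempty
  have hγmul : ∀ k, γ k * ∑ j : Fin N, x j / (x j - lam k) ^ 2 = 1 := by
    intro k
    rw [hγ k]
    exact inv_mul_cancel₀ (hsum_pos k).ne'
  -- W * V = 1
  have hWV : W * V = 1 := by
    ext k l
    rw [Matrix.mul_apply]
    by_cases hkl : k = l
    · subst hkl
      have : ∀ j : Fin N, W k j * V j k = γ k * (x j / (x j - lam k) ^ 2) := by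
        intro j
        rw [hW, hV]
        field_simp
      simp_rw [this]
      rw [← Finset.mul_sum, hγmul k]
      simp
    · have hab : lam k ≠ lam l := fun h => hkl (hlam_mono.injective h)
      have : ∀ j : Fin N, W k j * V j l =
          γ k / (lam k - lam l) * (lam k / (x j - lam k) - lam l / (x j - lam l)) := by
        intro j
        rw [hW, hV]
        have h1 := hd k j
        have h2 := hd l j
        have h3 : lam k - lam l ≠ 0 := sub_ne_zero.mpr hab
        field_simp
        ring
      simp_rw [this]
      rw [← Finset.mul_sum]
      have : ∑ j : Fin N, (lam k / (x j - lam k) - lam l / (x j - lam l)) = 0 := by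
        rw [Finset.sum_sub_distrib, hlam_root k, hlam_root l, sub_zero]
      rw [this, mul_zero]
      simp [Matrix.one_apply, hkl]
  have hVW : V * W = 1 := mul_eq_one_comm.mp hWV
  have hVunit : IsUnit V := (Matrix.isUnit_iff_isUnit_det V).mpr (Matrix.isUnit_det_of_right_inverse hVW)
  have hVinv : V⁻¹ = W := Matrix.inv_eq_right_inv hVW
  -- L * V = V * diagonal lam
  have hLV : L * V = V * Matrix.diagonal lam := by
    ext i k
    rw [Matrix.mul_apply, Matrix.mul_apply]
    have hLij : ∀ j, L i j = (if i = j then x i else 0) - x i / N := by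
      intro j
      rw [hL]
      by_cases h : i = j <;> simp [h] <;> field_simp <;> ring
    simp_rw [hLij, sub_mul]
    rw [Finset.sum_sub_distrib]
    have h1 : ∑ j : Fin N, (if i = j then x i else 0) * V j k = x i * V i k := by
      rw [Finset.sum_eq_single i]
      · simp
      · intro b _ hb; simp [Ne.symm hb]
      · simp
    have h2 : ∑ j : Fin N, x i / N * V j k = x i := by
      rw [← Finset.mul_sum, hcol k]
      field_simp
    rw [h1, h2]
    have h3 : ∑ j : Fin N, V i j * Matrix.diagonal lam j k = V i k * lam k := by
      rw [Finset.sum_eq_single k]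
      · simp [Matrix.diagonal]
      · intro b _ hb
        rw [Matrix.diagonal_apply_ne _ hb, mul_zero]
      · simp
    rw [h3, hV]
    have := hd k i
    field_simp
    ring
  have hLdecomp : L = V * Matrix.diagonal lam * W := by
    calc L = L * (V * W) := by rw [hVW, Matrix.mul_one]
    _ = (L * V) * W := by rw [Matrix.mul_assoc]
    _ = V * Matrix.diagonal lam * W := by rw [hLV]
  intro t ht j
  -- exp computation
  have hexp : NormedSpace.exp (-(t • L)) =
      V * Matrix.diagonal (fun k => Real.exp (-(t * lam k))) * W := by
    have hdiag : Matrix.diagonal (fun k => -(t * lam k)) = -(t • Matrix.diagonal lam) := by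
      ext a b
      by_cases h : a = b
      · subst h; simp [Matrix.diagonal]
      · simp [Matrix.diagonal, h]
    have h1 : -(t • L) = V * Matrix.diagonal (fun k => -(t * lam k)) * V⁻¹ := by
      rw [hVinv, hLdecomp, hdiag]
      rw [Matrix.mul_neg, Matrix.neg_mul, Matrix.mul_smul, Matrix.smul_mul]
    rw [h1, Matrix.exp_conj V _ hVunit, Matrix.exp_diagonal, hVinv]
    congr 2
    rw [Pi.exp_def]
    ext k
    rw [← Real.exp_eq_exp_ℝ]
  rw [hexp]
  -- entrywise computation
  have hentry : ∀ i : Fin N,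
      (V * Matrix.diagonal (fun k => Real.exp (-(t * lam k))) * W) i j =
      ∑ k : Fin N, V i k * Real.exp (-(t * lam k)) * W k j := by
    intro i
    rw [Matrix.mul_assoc, Matrix.mul_apply]
    congr 1
    ext k
    rw [Matrix.mul_apply, Finset.sum_eq_single k]
    · rw [Matrix.diagonal_apply_eq]; ring
    · intro b _ hb; simp [Matrix.diagonal_apply_ne' _ hb]
    · simp
  simp_rw [hentry]
  rw [Finset.sum_comm]
  have : ∀ k : Fin N, ∑ i : Fin N, V i k * Real.exp (-(t * lam k)) * W k j =
      (N : ℝ) * (Real.exp (-(t * lam k)) * W k j) := by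
    intro k
    rw [← Finset.sum_mul, ← Finset.sum_mul, hcol k]
    ring
  simp_rw [this]
  rw [← Finset.mul_sum, ← mul_assoc]
  have : (1 / (N : ℝ)) * N = 1 := by field_simp
  rw [this, one_mul]
  congr 1
  ext k
  rw [hW]
  ring
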